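/- Let A and B be uniform algebras on compact Hausdorff spaces X and Y, and let c be a nonzero complex number. Suppose S : A → B is surjective and satisfies Ran_π(Sf · (Sg + c·1)) = Ran_π(f · (g + c·1)) for all f, g ∈ A. Then S(λ·1) = λ·1 for every complex number λ. -/

import Mathlib

set_option maxHeartbeats 4000000
set_option synthInstance.maxHeartbeats 1000000

/-- The peripheral range of a continuous function on a compact space. -/
def Ranπ {X : Type*} [TopologicalSpace X] [CompactSpace X] (f : C(X, ℂ)) : Set ℂ :=
  {z | z ∈ Set.range f ∧ ‖z‖ = ‖f‖}

section helpers
variable {Z : Type*} [TopologicalSpace Z] [CompactSpace Z]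

lemma exists_abs_eq_norm [Nonempty Z] (f : C(Z, ℂ)) : ∃ z, ‖f z‖ = ‖f‖ := by
  obtain ⟨z, hz⟩ := Continuous.exists_forall_ge (β := Z)
    (by continuity : Continuous fun z => ‖f z‖)
    (by rw [Filter.cocompact_eq_bot]; exact Filter.tendsto_bot)
  refine ⟨z, le_antisymm (by simpa using f.norm_coe_le_norm z) ?_⟩
  exact (f.norm_le (norm_nonneg _)).2 fun x => by simpa using hz x

lemma ranπ_nonempty [Nonempty Z] (f : C(Z, ℂ)) : (Ranπ f).Nonempty := by
  obtain ⟨z, hz⟩ := exists_abs_eq_norm f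
  exact ⟨f z, ⟨z, rfl⟩, hz⟩

lemma ranπ_smul {a : ℂ} (ha : a ≠ 0) (f : C(Z, ℂ)) :
    Ranπ (a • f) = (a * ·) '' Ranπ f := by
  ext z
  constructor
  · rintro ⟨⟨x, hx⟩, habs⟩
    refine ⟨f x, ⟨⟨x, rfl⟩, ?_⟩, by simpa using hx⟩
    have h1 : ‖a * f x‖ = ‖a • f‖ := by
      rw [← habs, ← hx]; simp
    rw [norm_smul] at h1
    simp only [norm_mul] at h1
    exact mul_left_cancel₀ (norm_ne_zero_iff.mpr ha) h1
  · rintro ⟨w, ⟨⟨x, hx⟩, habs⟩, rfl⟩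
    refine ⟨⟨x, by simp [hx]⟩, ?_⟩
    rw [norm_smul, norm_mul, habs]

lemma ranπ_one [Nonempty Z] : Ranπ (1 : C(Z, ℂ)) = {1} := by
  ext z
  simp only [Ranπ, Set.mem_setOf_eq, Set.mem_range, Set.mem_singleton_iff]
  constructor
  · rintro ⟨⟨x, hx⟩, -⟩; simpa using hx.symm
  · rintro rfl; exact ⟨⟨Classical.arbitrary Z, rfl⟩, by simp⟩

lemma ranπ_zero [Nonempty Z] : Ranπ (0 : C(Z, ℂ)) = {0} := by
  ext z
  simp only [Ranπ, Set.mem_setOf_eq, Set.mem_range, Set.mem_singleton_iff]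
  constructor
  · rintro ⟨-, h⟩; simpa using h
  · rintro rfl; exact ⟨⟨Classical.arbitrary Z, rfl⟩, by simp⟩

lemma eq_zero_of_ranπ_zero [Nonempty Z] {f : C(Z, ℂ)} (h : Ranπ f = {0}) : f = 0 := by
  obtain ⟨z, hz⟩ := ranπ_nonempty f
  have hz0 : z = 0 := by have := h ▸ hz; simpa using this
  have : ‖f‖ = 0 := by rw [← hz.2, hz0]; simp
  simpa [norm_eq_zero] using this

end helpers

theorem stmt11 {X Y : Type*} [TopologicalSpace X] [CompactSpace X] [T2Space X]
    [TopologicalSpace Y] [CompactSpace Y] [T2Space Y]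
    (A : Subalgebra ℂ C(X, ℂ)) (hA : IsClosed (A : Set C(X, ℂ)))
    (hAsep : ∀ x y : X, x ≠ y → ∃ f ∈ A, f x ≠ f y)
    (B : Subalgebra ℂ C(Y, ℂ)) (hB : IsClosed (B : Set C(Y, ℂ)))
    (hBsep : ∀ x y : Y, x ≠ y → ∃ f ∈ B, f x ≠ f y)
    (c : ℂ) (hc : c ≠ 0) (S : A → B)
    (hSeq : ∀ f g : A,
      Ranπ ((S f * (S g + c • 1) : B) : C(Y, ℂ)) = Ranπ ((f * (g + c • 1) : A) : C(X, ℂ)))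
    (hSsurj : Function.Surjective S) :
    ∀ lam : ℂ, S (lam • 1) = lam • 1 := by
  intro lam
  rcases isEmpty_or_nonempty Y with hY | hY
  · haveI : Subsingleton C(Y, ℂ) :=
      ⟨fun f g => ContinuousMap.ext fun y => (IsEmpty.false y).elim⟩
    exact Subtype.ext (Subsingleton.elim _ _)
  have hX : Nonempty X := by
    by_contra hX
    rw [not_nonempty_iff] at hX
    have h := hSeq 1 1
    have h2 := ranπ_nonempty ((S 1 * (S 1 + c • 1) : B) : C(Y, ℂ))
    rw [h] at h2
    obtain ⟨z, ⟨x, -⟩, -⟩ := h2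
    exact IsEmpty.false x
  -- Step 1 : S 0 = 0
  have hS0 : S 0 = 0 := by
    obtain ⟨g, hg⟩ := hSsurj (1 - c • 1)
    have h := hSeq 0 g
    rw [hg] at h
    have e1 : ((1 - c • 1 : B) + c • 1) = 1 := by ring
    rw [e1, mul_one, zero_mul] at h
    rw [show ((0 : A) : C(X, ℂ)) = 0 from rfl, ranπ_zero] at h
    exact Subtype.ext (eq_zero_of_ranπ_zero h)
  -- Step 2 : Ranπ (S f) = Ranπ f
  have hRan : ∀ f : A, Ranπ ((S f : B) : C(Y, ℂ)) = Ranπ ((f : A) : C(X, ℂ)) := by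
    intro f
    have h := hSeq f 0
    rw [hS0] at h
    have e1 : (S f * ((0 : B) + c • 1)) = c • S f := by
      rw [zero_add, mul_smul_comm, mul_one]
    have e2 : (f * ((0 : A) + c • 1)) = c • f := by
      rw [zero_add, mul_smul_comm, mul_one]
    rw [e1, e2] at h
    rw [show ((c • S f : B) : C(Y, ℂ)) = c • ((S f : B) : C(Y, ℂ)) from rfl,
      show ((c • f : A) : C(X, ℂ)) = c • ((f : A) : C(X, ℂ)) from rfl,
      ranπ_smul hc, ranπ_smul hc] at h
    exact Set.image_injective.mpr (mul_right_injective₀ hc) h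
  by_cases hlc : lam + c = 0
  · -- degenerate case lam = -c
    obtain ⟨f1, hf1⟩ := hSsurj 1
    have h := hSeq f1 (lam • 1)
    have eA : ((lam • 1 : A) + c • 1) = (0 : A) := by
      rw [← add_smul, hlc, zero_smul]
    rw [eA, mul_zero, hf1, one_mul] at h
    rw [show ((0 : A) : C(X, ℂ)) = 0 from rfl, ranπ_zero] at h
    have h0 : S (lam • 1) + c • 1 = 0 := Subtype.ext (eq_zero_of_ranπ_zero h)
    have hlam : lam = -c := by linear_combination hlc
    have := eq_neg_of_add_eq_zero_left h0
    rw [this, hlam, ← neg_smul]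
  · -- main case
    set u : B := S (lam • 1) with hu
    set v : B := (lam + c)⁻¹ • (u + c • 1) with hv
    have huv : u + c • 1 = (lam + c) • v := by
      rw [hv, smul_inv_smul₀ hlc]
    have hkey : ∀ k : B, Ranπ ((k * v : B) : C(Y, ℂ)) = Ranπ ((k : B) : C(Y, ℂ)) := by
      intro k
      obtain ⟨f, hf⟩ := hSsurj k
      have h := hSeq f (lam • 1)
      rw [hf] at h
      have eA : ((f * ((lam • 1 : A) + c • 1) : A)) = (lam + c) • f := by
        rw [← add_smul, mul_smul_comm, mul_one]
      have eB : (k * (S (lam • 1) + c • 1) : B) = (lam + c) • (k * v) := by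
        rw [← hu, huv, mul_smul_comm]
      rw [eA, eB] at h
      rw [show (((lam + c) • (k * v) : B) : C(Y, ℂ)) = (lam + c) • ((k * v : B) : C(Y, ℂ)) from rfl,
        show (((lam + c) • f : A) : C(X, ℂ)) = (lam + c) • ((f : A) : C(X, ℂ)) from rfl,
        ranπ_smul hlc, ranπ_smul hlc] at h
      have h2 := Set.image_injective.mpr (mul_right_injective₀ hlc) h
      rw [h2, ← hRan f, hf]
    -- properties of v
    have hv1 : Ranπ ((v : B) : C(Y, ℂ)) = {1} := by
      have h := hkey 1
      rw [one_mul] at h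
      rw [h, show ((1 : B) : C(Y, ℂ)) = 1 from rfl, ranπ_one]
    have hnv : ‖((v : B) : C(Y, ℂ))‖ = 1 := by
      have h1 : (1 : ℂ) ∈ Ranπ ((v : B) : C(Y, ℂ)) := by rw [hv1]; rfl
      simpa using h1.2.symm
    have hbound : ∀ y, ‖((v : B) : C(Y, ℂ)) y‖ ≤ 1 := fun y => by
      have := ((v : B) : C(Y, ℂ)).norm_coe_le_norm y
      rwa [hnv] at this
    have hpt : ∀ y, ‖((v : B) : C(Y, ℂ)) y‖ = 1 → ((v : B) : C(Y, ℂ)) y = 1 := by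
      intro y hy
      have hmem : ((v : B) : C(Y, ℂ)) y ∈ Ranπ ((v : B) : C(Y, ℂ)) :=
        ⟨⟨y, rfl⟩, by rw [hy, hnv]⟩
      rwa [hv1] at hmem
    -- v = 1 pointwise
    have veq : ∀ y, ((v : B) : C(Y, ℂ)) y = 1 := by
      by_contra hcon
      push_neg at hcon
      obtain ⟨y0, hy0⟩ := hcon
      set a : ℂ := ((v : B) : C(Y, ℂ)) y0 with ha
      have hane : a - 1 ≠ 0 := sub_ne_zero.mpr hy0
      have habs : 0 < ‖a - 1‖ := norm_pos_iff.mpr hane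
      have hale : ‖a - 1‖ ≤ 2 := by
        have h1 : ‖a - 1‖ ≤ ‖a‖ + ‖(1 : ℂ)‖ := norm_sub_le a 1
        simp only [norm_one] at h1
        have h2 := hbound y0
        rw [← ha] at h2
        linarith
      set r : ℝ := 3 / ‖a - 1‖ with hr
      have hr32 : (3:ℝ)/2 ≤ r := by
        rw [hr]; apply div_le_div_of_nonneg_left <;> linarith
      set z : ℂ := 1 + (r : ℂ) * (a - 1) with hz
      have hz1 : ‖z - 1‖ = 3 := by
        have : z - 1 = (r : ℂ) * (a - 1) := by rw [hz]; ring
        rw [this, norm_mul, Complex.norm_real, Real.norm_eq_abs, abs_of_pos (by linarith : (0:ℝ) < r), hr]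
        field_simp
      have hza : ‖z - a‖ = 3 - ‖a - 1‖ := by
        have e : z - a = ((r : ℂ) - 1) * (a - 1) := by rw [hz]; ring
        rw [e, norm_mul]
        have : ((r : ℂ) - 1) = ((r - 1 : ℝ) : ℂ) := by push_cast; ring
        rw [this, Complex.norm_real, Real.norm_eq_abs, abs_of_pos (by linarith : (0:ℝ) < r - 1)]
        rw [hr]; field_simp
      have hz_norm : 2 ≤ ‖z‖ := by
        have h1 : ‖z - 1‖ ≤ ‖z‖ + ‖(1 : ℂ)‖ := norm_sub_le z 1
        simp only [norm_one] at h1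
        rw [hz1] at h1
        linarith
      -- invertibility of z - v in B
      haveI : CompleteSpace B := hB.completeSpace_coe
      haveI : NormOneClass B := ⟨show ‖((1 : B) : C(Y, ℂ))‖ = 1 from norm_one⟩
      have hzspec : z ∉ spectrum ℂ v := by
        intro hmem
        have h1 := spectrum.norm_le_norm_of_mem hmem
        rw [show ‖v‖ = ‖((v : B) : C(Y, ℂ))‖ from rfl, hnv] at h1
        linarith
      obtain ⟨w, hw⟩ := spectrum.notMem_iff.mp hzspec
      set k : B := ↑w⁻¹ with hk
      have hkinv : k * (algebraMap ℂ B z - v) = 1 := by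
        rw [hk, ← hw]; exact w.inv_mul
      have hkpt : ∀ y, ((k : B) : C(Y, ℂ)) y * (z - ((v : B) : C(Y, ℂ)) y) = 1 := by
        intro y
        have h1 := congrArg (fun b : B => ((b : C(Y, ℂ)) y)) hkinv
        simpa using h1
      have hknz : ∀ y, ((k : B) : C(Y, ℂ)) y ≠ 0 := by
        intro y h0
        have := hkpt y
        rw [h0, zero_mul] at this
        exact zero_ne_one this
      have habs_k : ∀ y, ‖((k : B) : C(Y, ℂ)) y‖
          * ‖z - ((v : B) : C(Y, ℂ)) y‖ = 1 := by
        intro y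
        rw [← norm_mul, hkpt y, norm_one]
      -- use the key identity with k
      obtain ⟨z0, hz0mem⟩ := ranπ_nonempty ((k * v : B) : C(Y, ℂ))
      have hz0mem' := (hkey k) ▸ hz0mem
      obtain ⟨⟨y1, hy1⟩, hz0abs⟩ := hz0mem
      have hNeq : ‖((k * v : B) : C(Y, ℂ))‖ = ‖((k : B) : C(Y, ℂ))‖ := by
        rw [← hz0abs, hz0mem'.2]
      have hmul : ((k * v : B) : C(Y, ℂ)) y1
          = ((k : B) : C(Y, ℂ)) y1 * ((v : B) : C(Y, ℂ)) y1 := rfl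
      have h5 : ‖((k : B) : C(Y, ℂ)) y1‖ * ‖((v : B) : C(Y, ℂ)) y1‖
          = ‖((k : B) : C(Y, ℂ))‖ := by
        rw [← norm_mul, ← hmul, hy1, hz0abs, hNeq]
      have h6 : ‖((k : B) : C(Y, ℂ)) y1‖ ≤ ‖((k : B) : C(Y, ℂ))‖ := by
        have := ((k : B) : C(Y, ℂ)).norm_coe_le_norm y1
        exact this
      have hkpos : 0 < ‖((k : B) : C(Y, ℂ)) y1‖ :=
        norm_pos_iff.mpr (hknz y1)
      have h7 : (1:ℝ) ≤ ‖((v : B) : C(Y, ℂ)) y1‖ := by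
        nlinarith [hbound y1]
      have h8 : ((v : B) : C(Y, ℂ)) y1 = 1 := hpt y1 (le_antisymm (hbound y1) h7)
      -- norm of k equals 1/3
      have hN3 : ‖((k : B) : C(Y, ℂ))‖ = 1 / 3 := by
        have h12 := habs_k y1
        rw [h8, hz1] at h12
        have h13 : ‖((k : B) : C(Y, ℂ)) y1‖ = 1 / 3 := by linarith
        rw [← h5, h8, norm_one, mul_one, h13]
      -- but k at y0 is bigger
      have hky0 : ‖((k : B) : C(Y, ℂ)) y0‖ = 1 / (3 - ‖a - 1‖) := by
        have h12 := habs_k y0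
        rw [← ha, hza] at h12
        rw [eq_div_iff (by linarith : (3 : ℝ) - ‖a - 1‖ ≠ 0)]
        linarith
      have h9 : ‖((k : B) : C(Y, ℂ)) y0‖ ≤ ‖((k : B) : C(Y, ℂ))‖ := by
        have := ((k : B) : C(Y, ℂ)).norm_coe_le_norm y0
        exact this
      rw [hky0, hN3] at h9
      have h10 : (1:ℝ)/3 < 1 / (3 - ‖a - 1‖) := by
        apply div_lt_div_of_pos_left <;> linarith
      linarith
    have hvone : v = (1 : B) := Subtype.ext (ContinuousMap.ext veq)
    have h11 : u + c • 1 = lam • (1 : B) + c • 1 := by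
      rw [huv, hvone, add_smul]
    have := add_right_cancel h11
    rw [hu] at this
    exact this
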